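/- Let n ≥ 1 be an integer, θ ∈ (0, π) and C > 0. Let s be a C² capillary function on C_θ with τ[s] > 0 and 0 < s(ζ) ≤ C for all ζ ∈ C_θ, and let G be its positively 1-homogeneous extension. Then the spherical gradient of s is bounded by C / sin θ: for every u ∈ S^n_θ, ‖∇G(u) − G(u)·u‖ ≤ C / sin θ (equivalently, |∇̄s| ≤ C / sin θ on C_θ). -/

import Mathlib

open MeasureTheory Real Set
open scoped RealInnerProductSpace

noncomputable section

abbrev V (n : ℕ) := EuclideanSpace ℝ (Fin (n + 1))

/-- The vertical unit vector `E_{n+1}`. -/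
def Etop (n : ℕ) : V n := EuclideanSpace.single (Fin.last n) 1

/-- The spherical cap `S^n_θ`. -/
def sphCap (n : ℕ) (θ : ℝ) : Set (V n) :=
  {u | ‖u‖ = 1 ∧ Real.cos θ ≤ u (Fin.last n)}

/-- The boundary circle `∂S^n_θ`. -/
def sphCapBdry (n : ℕ) (θ : ℝ) : Set (V n) :=
  {u | ‖u‖ = 1 ∧ u (Fin.last n) = Real.cos θ}

/-- The capillary cap `C_θ`. -/
def capCap (n : ℕ) (θ : ℝ) : Set (V n) :=
  {ζ | 0 ≤ ζ (Fin.last n) ∧ ‖ζ + Real.cos θ • Etop n‖ = 1}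

/-- The open cone over `S^n_θ`. -/
def coneCap (n : ℕ) (θ : ℝ) : Set (V n) :=
  {x | ∃ l : ℝ, 0 < l ∧ ∃ u ∈ sphCap n θ, x = l • u}

/-- `G` is a positively 1-homogeneous extension of `g : C_θ → ℝ` which is `C^m` on an
open neighborhood of the cone over `S^n_θ`. -/
def IsHomExt (n : ℕ) (θ : ℝ) (m : ℕ∞) (g G : V n → ℝ) : Prop :=
  (∃ U : Set (V n), IsOpen U ∧ coneCap n θ ⊆ U ∧ ContDiffOn ℝ m G U) ∧
  (∀ l : ℝ, 0 < l → ∀ u ∈ sphCap n θ, G (l • u) = l * G u) ∧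
  (∀ ζ ∈ capCap n θ, G (ζ + Real.cos θ • Etop n) = g ζ)

/-- The Hessian of `G` at `u` as a quadratic/bilinear form. -/
def hessQ (n : ℕ) (G : V n → ℝ) (u v w : V n) : ℝ :=
  fderiv ℝ (fderiv ℝ G) u v w

/-- The Hessian matrix `D²G(u)` in the standard coordinates. -/
def hessM (n : ℕ) (G : V n → ℝ) (u : V n) : Matrix (Fin (n + 1)) (Fin (n + 1)) ℝ :=
  fun i j => fderiv ℝ (fderiv ℝ G) u (EuclideanSpace.single i 1) (EuclideanSpace.single j 1)

/-- `σ_j` of the eigenvalues of `D²G(u)` (via characteristic polynomial coefficients). -/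
def sigmaElem (n : ℕ) (j : ℕ) (G : V n → ℝ) (u : V n) : ℝ :=
  (-1 : ℝ) ^ j * ((hessM n G u).charpoly.coeff (n + 1 - j))

/-- `τ[g] ≥ 0` : the Hessian of the extension is positive semidefinite on `S^n_θ`. -/
def TauNonneg (n : ℕ) (θ : ℝ) (G : V n → ℝ) : Prop :=
  ∀ u ∈ sphCap n θ, ∀ v : V n, 0 ≤ hessQ n G u v v

/-- `τ[g] > 0`. -/
def TauPos (n : ℕ) (θ : ℝ) (G : V n → ℝ) : Prop :=
  TauNonneg n θ G ∧
  ∀ u ∈ sphCap n θ, ∀ v : V n, v ≠ 0 → ⟪v, u⟫ = 0 → 0 < hessQ n G u v v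

/-- Capillary (Robin) boundary condition: `∂_{n+1}G = 0` on `∂S^n_θ`. -/
def IsCapillaryF (n : ℕ) (θ : ℝ) (G : V n → ℝ) : Prop :=
  ∀ u ∈ sphCapBdry n θ, fderiv ℝ G u (Etop n) = 0

/-- Reflection negating the horizontal coordinates. -/
def horizNeg (n : ℕ) (ζ : V n) : V n := (2 * ζ (Fin.last n)) • Etop n - ζ

/-- Support function of a set. -/
def suppFn (n : ℕ) (K : Set (V n)) (u : V n) : ℝ := sSup ((fun y => ⟪u, y⟫) '' K)

/-- Relative interior (within the hyperplane `{x_{n+1}=0}`) of the base `K ∩ {x_{n+1}=0}`. -/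
def relintBase (n : ℕ) (K : Set (V n)) : Set (V n) :=
  {x | x (Fin.last n) = 0 ∧ ∃ ε > 0, ∀ y : V n, y (Fin.last n) = 0 → ‖y - x‖ < ε → y ∈ K}

/-- A `θ`-capillary convex body. -/
def IsCapBody (n : ℕ) (θ : ℝ) (K : Set (V n)) : Prop :=
  IsCompact K ∧ Convex ℝ K ∧ (interior K).Nonempty ∧
  (∀ x ∈ K, 0 ≤ x (Fin.last n)) ∧
  (∀ x ∈ K, 0 < x (Fin.last n) → ∀ u : V n, ‖u‖ = 1 → ⟪u, x⟫ = suppFn n K u →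
    Real.cos θ ≤ u (Fin.last n)) ∧
  (∀ v : V n, ‖v‖ = 1 → v (Fin.last n) = 0 →
    suppFn n K (Real.sin θ • v + Real.cos θ • Etop n) = Real.sin θ * suppFn n K v) ∧
  (relintBase n K).Nonempty

/-- `ψ` is one of `x²`, `x^p (p<0)`, `-log x`. -/
def PsiOK (ψ : ℝ → ℝ) : Prop :=
  (ψ = fun x : ℝ => x ^ 2) ∨ (∃ p : ℝ, p < 0 ∧ ψ = fun x : ℝ => x ^ p) ∨
    (ψ = fun x : ℝ => -Real.log x)


set_option maxHeartbeats 1000000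

lemma inner_etop {n : ℕ} (y : V n) : ⟪y, Etop n⟫ = y (Fin.last n) := by
  simp [Etop, EuclideanSpace.inner_single_right]

lemma etop_last {n : ℕ} : Etop n (Fin.last n) = 1 := by
  simp [Etop, EuclideanSpace.single_apply]

lemma norm_etop {n : ℕ} : ‖Etop n‖ = 1 := by simp [Etop]

lemma apply_last_add {n : ℕ} (x y : V n) :
    (x + y) (Fin.last n) = x (Fin.last n) + y (Fin.last n) := rfl

lemma apply_last_sub {n : ℕ} (x y : V n) :
    (x - y) (Fin.last n) = x (Fin.last n) - y (Fin.last n) := rfl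

lemma apply_last_smul {n : ℕ} (r : ℝ) (x : V n) :
    (r • x) (Fin.last n) = r * x (Fin.last n) := rfl

def Scone (n : ℕ) (θ : ℝ) : Set (V n) :=
  {x | 0 < ‖x‖ ∧ Real.cos θ * ‖x‖ < x (Fin.last n)}

lemma isOpen_Scone (n : ℕ) (θ : ℝ) : IsOpen (Scone n θ) := by
  apply IsOpen.inter
  · exact isOpen_lt continuous_const continuous_norm
  · exact isOpen_lt (continuous_const.mul continuous_norm)
      ((EuclideanSpace.proj (Fin.last n)).continuous)

lemma le_of_sq_le_sq_aux {x y : ℝ} (hy : 0 ≤ y) (h : x ^ 2 ≤ y ^ 2) : x ≤ y := by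
  rcases le_or_gt x 0 with h0 | h0
  · exact h0.trans hy
  · nlinarith

lemma cone_strict_aux {c sθ t N : ℝ} (hs : 0 < sθ) (hcs : sθ ^ 2 + c ^ 2 = 1)
    (hN : N ^ 2 = sθ ^ 2 + t ^ 2) (hN0 : 0 ≤ N) (hct : c < t) : c * N < t := by
  rcases le_or_gt c 0 with hcase | hcase
  · rcases lt_or_ge 0 t with hcase2 | hcase2
    · calc c * N ≤ 0 := mul_nonpos_of_nonpos_of_nonneg hcase hN0
      _ < t := hcase2
    · have hc0 : c < 0 := lt_of_lt_of_le hct hcase2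
      have ht2 : t ^ 2 < c ^ 2 := by
        nlinarith [mul_pos (show (0:ℝ) < -(c+t) by linarith) (show (0:ℝ) < t - c by linarith)]
      have hc2 : c ^ 2 = 1 - sθ ^ 2 := by linarith
      have hkey : (c * N) ^ 2 - t ^ 2 = sθ ^ 2 * (c ^ 2 - t ^ 2) := by
        rw [mul_pow, hN, hc2]; ring
      have h1 : (-t) ^ 2 < (-(c * N)) ^ 2 := by
        have : 0 < sθ ^ 2 * (c ^ 2 - t ^ 2) := mul_pos (pow_pos hs 2) (by linarith)
        rw [neg_pow, neg_pow]; nlinarith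
      have h2 : -t < -(c * N) :=
        lt_of_pow_lt_pow_left₀ 2 (by nlinarith [mul_nonpos_of_nonpos_of_nonneg hc0.le hN0]) h1
      linarith
  · have ht0 : 0 < t := lt_trans hcase hct
    have ht2 : c ^ 2 < t ^ 2 := by nlinarith
    have hc2 : c ^ 2 = 1 - sθ ^ 2 := by linarith
    have hkey : t ^ 2 - (c * N) ^ 2 = sθ ^ 2 * (t ^ 2 - c ^ 2) := by
      rw [mul_pow, hN, hc2]; ring
    have h1 : (c * N) ^ 2 < t ^ 2 := by
      have : 0 < sθ ^ 2 * (t ^ 2 - c ^ 2) := mul_pos (pow_pos hs 2) (by linarith)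
      linarith
    exact lt_of_pow_lt_pow_left₀ 2 ht0.le h1

lemma sq_eq_one_iff_of_ne_neg_one_aux {b : ℝ} (h : b ^ 2 = 1) : b = 1 ∨ b = -1 := by
  have : (b - 1) * (b + 1) = 0 := by nlinarith
  rcases mul_eq_zero.1 this with h1 | h1
  · left; linarith
  · right; linarith

lemma mem_cone_of {n : ℕ} {θ : ℝ} {x : V n} (hx : x ≠ 0)
    (h : Real.cos θ * ‖x‖ ≤ x (Fin.last n)) : x ∈ coneCap n θ := by
  have hn : (0:ℝ) < ‖x‖ := norm_pos_iff.2 hx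
  refine ⟨‖x‖, hn, ‖x‖⁻¹ • x, ⟨?_, ?_⟩, ?_⟩
  · rw [norm_smul, norm_inv, norm_norm]; field_simp
  · show Real.cos θ ≤ ‖x‖⁻¹ * x (Fin.last n)
    rw [← div_eq_inv_mul, le_div_iff₀ hn]
    linarith [h]
  · rw [smul_smul]
    rw [mul_inv_cancel₀ (ne_of_gt hn), one_smul]

lemma cone_prop {n : ℕ} {θ : ℝ} {x : V n} (hx : x ∈ coneCap n θ) :
    x ≠ 0 ∧ Real.cos θ * ‖x‖ ≤ x (Fin.last n) := by
  obtain ⟨l, hl, u, ⟨hu1, hu2⟩, rfl⟩ := hx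
  have hnorm : ‖l • u‖ = l := by
    rw [norm_smul, hu1, mul_one, Real.norm_eq_abs, abs_of_pos hl]
  constructor
  · intro h0
    rw [h0] at hnorm; simp at hnorm; exact (ne_of_gt hl) hnorm.symm
  · rw [hnorm]
    show Real.cos θ * l ≤ l * u (Fin.last n)
    calc Real.cos θ * l = l * Real.cos θ := mul_comm _ _
    _ ≤ l * u (Fin.last n) := by exact mul_le_mul_of_nonneg_left hu2 hl.le

lemma Scone_subset_cone {n : ℕ} {θ : ℝ} : Scone n θ ⊆ coneCap n θ := fun x hx =>
  mem_cone_of (norm_pos_iff.1 hx.1) hx.2.le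

lemma smul_mem_Scone {n : ℕ} {θ : ℝ} {x : V n} (hx : x ∈ Scone n θ) {l : ℝ} (hl : 0 < l) :
    l • x ∈ Scone n θ := by
  obtain ⟨h1, h2⟩ := hx
  have hns : ‖l • x‖ = l * ‖x‖ := by rw [norm_smul, Real.norm_eq_abs, abs_of_pos hl]
  constructor
  · rw [hns]; positivity
  · show Real.cos θ * ‖l • x‖ < l * x (Fin.last n)
    rw [hns]
    calc Real.cos θ * (l * ‖x‖) = l * (Real.cos θ * ‖x‖) := by ring
    _ < l * x (Fin.last n) := by exact (mul_lt_mul_iff_right₀ hl).2 h2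

lemma sphCap_subset_cone {n : ℕ} {θ : ℝ} : sphCap n θ ⊆ coneCap n θ := fun u hu =>
  ⟨1, one_pos, u, hu, (one_smul ℝ u).symm⟩

lemma hom_cone {n : ℕ} {θ : ℝ} {G : V n → ℝ}
    (hs21 : ∀ l : ℝ, 0 < l → ∀ u ∈ sphCap n θ, G (l • u) = l * G u)
    {x : V n} (hx : x ∈ coneCap n θ) {l : ℝ} (hl : 0 < l) : G (l • x) = l * G x := by
  obtain ⟨l₀, hl₀, u, hu, rfl⟩ := hx
  rw [smul_smul, hs21 (l * l₀) (by positivity) u hu, hs21 l₀ hl₀ u hu]; ring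


lemma construct_v {n : ℕ} {θ : ℝ} (hθ : θ ∈ Ioo 0 π) {w : V n} (hw : ‖w‖ = 1) :
    ∃ lam mu : ℝ, Real.sin θ ≤ lam ∧ 0 ≤ mu ∧ ‖lam • w + mu • Etop n‖ = 1 ∧
      |Real.cos θ| ≤ (lam • w + mu • Etop n) (Fin.last n) := by
  set c : ℝ := Real.cos θ with hc
  set sθ : ℝ := Real.sin θ with hsθ
  have hs_pos : 0 < sθ := Real.sin_pos_of_pos_of_lt_pi hθ.1 hθ.2
  have hcs : sθ ^ 2 + c ^ 2 = 1 := by rw [hsθ, hc]; rw [Real.sin_sq_add_cos_sq]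
  have hs1 : sθ ≤ 1 := by nlinarith [sq_nonneg c]
  set a : ℝ := w (Fin.last n) with ha
  have hainner : ⟪w, Etop n⟫ = a := inner_etop w
  have ha1 : |a| ≤ 1 := by
    have := abs_real_inner_le_norm w (Etop n)
    rwa [hainner, hw, norm_etop, mul_one] at this
  have hwe_last : ∀ lam mu : ℝ, (lam • w + mu • Etop n) (Fin.last n) = lam * a + mu := by
    intro lam mu
    rw [apply_last_add, apply_last_smul, apply_last_smul, etop_last, ← ha]; ring
  have hwe_norm : ∀ lam mu : ℝ, ‖lam • w + mu • Etop n‖ ^ 2 = lam ^ 2 + 2 * lam * mu * a + mu ^ 2 := by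
    intro lam mu
    rw [norm_add_sq_real, real_inner_smul_left, real_inner_smul_right, hainner,
      norm_smul, norm_smul, hw, norm_etop, mul_one, mul_one, Real.norm_eq_abs, Real.norm_eq_abs,
      sq_abs, sq_abs]
    ring
  rcases le_or_gt (|c|) a with hcase | hcase
  · refine ⟨1, 0, hs1, le_refl 0, ?_, ?_⟩
    · rw [one_smul, zero_smul, add_zero, hw]
    · rw [one_smul, zero_smul, add_zero]; exact hcase
  rcases eq_or_lt_of_le (neg_le_of_abs_le ha1) with hm1 | hm1
  · -- a = -1, w = -Etop
    have hwneg : w = -Etop n := by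
      have h0 : ‖w + Etop n‖ ^ 2 = 0 := by
        rw [norm_add_sq_real, hainner, hw, norm_etop, ← hm1]; ring
      have : w + Etop n = 0 := by
        rw [← norm_eq_zero]
        nlinarith [norm_nonneg (w + Etop n)]
      linear_combination (norm := module) this
    refine ⟨sθ, 1 + sθ, le_refl sθ, by linarith, ?_, ?_⟩
    · have : sθ • w + (1 + sθ) • Etop n = Etop n := by
        rw [hwneg]; module
      rw [this, norm_etop]
    · have : sθ • w + (1 + sθ) • Etop n = Etop n := by
        rw [hwneg]; module
      rw [this, etop_last]
      exact abs_cos_le_one θ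
  · -- -1 < a < |c|
    have ha2 : a < 1 := lt_of_lt_of_le hcase (abs_cos_le_one θ)
    have hr2pos : 0 < 1 - a ^ 2 := by nlinarith
    set r : ℝ := Real.sqrt (1 - a ^ 2) with hrdef
    have hrpos : 0 < r := Real.sqrt_pos.2 hr2pos
    have hr2 : r ^ 2 = 1 - a ^ 2 := Real.sq_sqrt hr2pos.le
    have hr1 : r ≤ 1 := by nlinarith [sq_nonneg a]
    set lam : ℝ := sθ / r with hlam
    have hlam_pos : 0 < lam := div_pos hs_pos hrpos
    have hlam_ge : sθ ≤ lam := by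
      rw [hlam, le_div_iff₀ hrpos]
      nlinarith
    set mu : ℝ := |c| - lam * a with hmu
    have hmu0 : 0 ≤ mu := by
      rcases le_or_gt a 0 with haneg | hapos
      · have h0 : lam * a ≤ 0 := mul_nonpos_of_nonneg_of_nonpos hlam_pos.le haneg
        rw [hmu]
        linarith [abs_nonneg c]
      · have hsq : (sθ * a) ^ 2 ≤ (|c| * r) ^ 2 := by
          have hac : a ^ 2 ≤ c ^ 2 := by
            have := sq_abs c
            nlinarith [hcase, hapos]
          rw [mul_pow, mul_pow, sq_abs, hr2]
          nlinarith [sq_nonneg a, sq_nonneg c]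
        have hle : sθ * a ≤ |c| * r :=
          le_of_sq_le_sq_aux (by positivity) hsq
        rw [hmu, sub_nonneg, hlam, div_mul_eq_mul_div, div_le_iff₀ hrpos]
        linarith [hle]
    have hlast : lam * a + mu = |c| := by rw [hmu]; ring
    refine ⟨lam, mu, hlam_ge, hmu0, ?_, ?_⟩
    · have h2 : ‖lam • w + mu • Etop n‖ ^ 2 = 1 := by
        rw [hwe_norm]
        have expand : lam ^ 2 + 2 * lam * mu * a + mu ^ 2
            = lam ^ 2 * (1 - a ^ 2) + (lam * a + mu) ^ 2 := by ring
        rw [expand, hlast, sq_abs, ← hr2, hlam]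
        field_simp
        linarith [hcs]
      nlinarith [norm_nonneg (lam • w + mu • Etop n)]
    · rw [hwe_last, hlast]

section calc1
variable {n : ℕ} {θ : ℝ} {G : V n → ℝ} {U : Set (V n)}
variable (hU : IsOpen U) (hUc : coneCap n θ ⊆ U) (hG : ContDiffOn ℝ 2 G U)

include hU hG in
lemma diffAtG {x : V n} (hx : x ∈ U) : DifferentiableAt ℝ G x :=
  (hG.differentiableOn (by norm_num)).differentiableAt (hU.mem_nhds hx)

include hU hG in
lemma diffAtG' {x : V n} (hx : x ∈ U) : DifferentiableAt ℝ (fderiv ℝ G) x :=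
  (((hG.fderiv_of_isOpen hU (le_refl ((1:WithTop ℕ∞)+1))).differentiableOn (by norm_num)).differentiableAt
    (hU.mem_nhds hx))

include hU hG in
lemma contOnG' : ContinuousOn (fderiv ℝ G) U :=
  hG.continuousOn_fderiv_of_isOpen hU (by norm_num)

include hU hUc hG in
lemma eulerG (hs21 : ∀ l : ℝ, 0 < l → ∀ u ∈ sphCap n θ, G (l • u) = l * G u)
    {x : V n} (hx : x ∈ coneCap n θ) : fderiv ℝ G x x = G x := by
  have h1 : HasDerivAt (fun l : ℝ => l • x) ((1:ℝ) • x) 1 := (hasDerivAt_id 1).smul_const x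
  have h2 : HasDerivAt (fun l : ℝ => G (l • x)) (fderiv ℝ G ((1:ℝ) • x) ((1:ℝ) • x)) 1 :=
    (diffAtG hU hG (by rw [one_smul]; exact hUc hx)).hasFDerivAt.comp_hasDerivAt 1 h1
  have h3 : HasDerivAt (fun l : ℝ => l * G x) (G x) 1 := by
    simpa using (hasDerivAt_id (1:ℝ)).mul_const (G x)
  have heq : (fun l : ℝ => G (l • x)) =ᶠ[nhds (1:ℝ)] (fun l : ℝ => l * G x) := by
    filter_upwards [eventually_gt_nhds (by norm_num : (0:ℝ) < 1)] with l hl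
    exact hom_cone hs21 hx hl
  have h4 := h2.congr_of_eventuallyEq heq.symm
  have := h4.unique h3
  rw [one_smul] at this
  exact this

include hU hUc hG in
lemma fderiv_smul_eq (hs21 : ∀ l : ℝ, 0 < l → ∀ u ∈ sphCap n θ, G (l • u) = l * G u)
    {x : V n} (hx : x ∈ Scone n θ) {l : ℝ} (hl : 0 < l) :
    fderiv ℝ G (l • x) = fderiv ℝ G x := by
  have hxU : x ∈ U := hUc (Scone_subset_cone hx)
  have hlxU : l • x ∈ U := hUc (Scone_subset_cone (smul_mem_Scone hx hl))
  have heq : (fun z : V n => G (l • z)) =ᶠ[nhds x] (fun z : V n => l * G z) := by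
    filter_upwards [(isOpen_Scone n θ).mem_nhds hx] with z hz
    exact hom_cone hs21 (Scone_subset_cone hz) hl
  have hlin : HasFDerivAt (fun z : V n => l • z) (l • ContinuousLinearMap.id ℝ (V n)) x := by
    exact (ContinuousLinearMap.id ℝ (V n)).hasFDerivAt.const_smul l
  have h1 : HasFDerivAt (fun z : V n => G (l • z))
      ((fderiv ℝ G (l • x)).comp (l • ContinuousLinearMap.id ℝ (V n))) x :=
    (diffAtG hU hG hlxU).hasFDerivAt.comp x hlin
  have h2 : HasFDerivAt (fun z : V n => l * G z) (l • fderiv ℝ G x) x :=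
    (diffAtG hU hG hxU).hasFDerivAt.const_mul l
  have h3 := (h1.congr_of_eventuallyEq heq.symm).unique h2
  ext y
  have := congrArg (fun (L : V n →L[ℝ] ℝ) => L y) h3
  simp only [ContinuousLinearMap.comp_apply, ContinuousLinearMap.smul_apply,
    ContinuousLinearMap.id_apply, ContinuousLinearMap.coe_smul', Pi.smul_apply] at this
  have hmap : fderiv ℝ G (l • x) (l • y) = l * fderiv ℝ G (l • x) y := by
    rw [(fderiv ℝ G (l • x)).map_smul]; rfl
  rw [hmap] at this
  exact mul_left_cancel₀ hl.ne' this

include hU hUc hG in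
lemma hess_nonneg_S (hs21 : ∀ l : ℝ, 0 < l → ∀ u ∈ sphCap n θ, G (l • u) = l * G u)
    (hτ : ∀ u ∈ sphCap n θ, ∀ v : V n, 0 ≤ fderiv ℝ (fderiv ℝ G) u v v)
    {x : V n} (hx : x ∈ Scone n θ) (y : V n) : 0 ≤ fderiv ℝ (fderiv ℝ G) x y y := by
  obtain ⟨hx1, hx2⟩ := hx
  set l : ℝ := ‖x‖ with hldef
  set q : V n := l⁻¹ • x with hqdef
  have hql : l • q = x := by rw [hqdef, smul_smul, mul_inv_cancel₀ hx1.ne', one_smul]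
  have hqS : q ∈ Scone n θ := smul_mem_Scone ⟨hx1, hx2⟩ (by positivity)
  have hqcap : q ∈ sphCap n θ := by
    constructor
    · rw [hqdef, norm_smul, norm_inv, norm_norm]; field_simp; exact div_self hx1.ne'
    · have := hqS.2
      have hq1 : ‖q‖ = 1 := by rw [hqdef, norm_smul, norm_inv, norm_norm]; field_simp; exact div_self hx1.ne'
      rw [hq1, mul_one] at this
      exact this.le
  have heq : (fun z : V n => fderiv ℝ G (l • z)) =ᶠ[nhds q] (fderiv ℝ G) := by
    filter_upwards [(isOpen_Scone n θ).mem_nhds hqS] with z hz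
    exact fderiv_smul_eq hU hUc hG hs21 hz hx1
  have hqU : q ∈ U := hUc (Scone_subset_cone hqS)
  have hxU : x ∈ U := hUc (Scone_subset_cone ⟨hx1, hx2⟩)
  have hlin : HasFDerivAt (fun z : V n => l • z) (l • ContinuousLinearMap.id ℝ (V n)) q := by
    exact (ContinuousLinearMap.id ℝ (V n)).hasFDerivAt.const_smul l
  have h1 : HasFDerivAt (fun z : V n => fderiv ℝ G (l • z))
      ((fderiv ℝ (fderiv ℝ G) (l • q)).comp (l • ContinuousLinearMap.id ℝ (V n))) q := by
    refine HasFDerivAt.comp q ?_ hlin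
    rw [hql]
    exact (diffAtG' hU hG hxU).hasFDerivAt
  have h2 := (h1.congr_of_eventuallyEq heq.symm).unique (diffAtG' hU hG hqU).hasFDerivAt
  have h3 := congrArg (fun (L : V n →L[ℝ] (V n →L[ℝ] ℝ)) => L y y) h2
  simp only [ContinuousLinearMap.comp_apply, ContinuousLinearMap.smul_apply,
    ContinuousLinearMap.id_apply] at h3
  rw [hql] at h3
  have h4 : fderiv ℝ (fderiv ℝ G) x (l • y) y = l * fderiv ℝ (fderiv ℝ G) x y y := by
    rw [(fderiv ℝ (fderiv ℝ G) x).map_smul]; rfl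
  rw [h4] at h3
  have h5 := hτ q hqcap y
  rw [← h3] at h5
  exact nonneg_of_mul_nonneg_right h5 (by positivity)
  
include hU hUc hG in
lemma seg_lemma (hs21 : ∀ l : ℝ, 0 < l → ∀ u ∈ sphCap n θ, G (l • u) = l * G u)
    (hτ : ∀ u ∈ sphCap n θ, ∀ v : V n, 0 ≤ fderiv ℝ (fderiv ℝ G) u v v)
    (z₀ d : V n) {t₀ t₁ : ℝ} (ht : t₀ < t₁)
    (hint : ∀ t ∈ Ioo t₀ t₁, z₀ + t • d ∈ Scone n θ)
    (he0 : z₀ + t₀ • d ∈ U) (he1 : z₀ + t₁ • d ∈ U) :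
    fderiv ℝ G (z₀ + t₀ • d) d ≤ fderiv ℝ G (z₀ + t₁ • d) d ∧
    G (z₀ + t₀ • d) + (t₁ - t₀) * fderiv ℝ G (z₀ + t₀ • d) d ≤ G (z₀ + t₁ • d) := by
  have hmemU : ∀ t ∈ Icc t₀ t₁, z₀ + t • d ∈ U := by
    intro t htm
    rcases eq_or_lt_of_le htm.1 with h | h
    · rwa [← h]
    rcases eq_or_lt_of_le htm.2 with h2 | h2
    · rwa [h2]
    exact hUc (Scone_subset_cone (hint t ⟨h, h2⟩))
  have hz : ∀ t : ℝ, HasDerivAt (fun t : ℝ => z₀ + t • d) d t := fun t => by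
    simpa using ((hasDerivAt_id t).smul_const d).const_add z₀
  set φ : ℝ → ℝ := fun t => fderiv ℝ G (z₀ + t • d) d with hφ
  have hφd : ∀ t ∈ Ioo t₀ t₁, HasDerivAt φ (fderiv ℝ (fderiv ℝ G) (z₀ + t • d) d d) t := by
    intro t htm
    have h1 : HasDerivAt (fun t : ℝ => fderiv ℝ G (z₀ + t • d))
        (fderiv ℝ (fderiv ℝ G) (z₀ + t • d) d) t :=
      (diffAtG' hU hG (hUc (Scone_subset_cone (hint t htm)))).hasFDerivAt.comp_hasDerivAt t (hz t)
    exact ((ContinuousLinearMap.apply ℝ ℝ d).hasFDerivAt.comp_hasDerivAt t h1 : _)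
  have hφc : ContinuousOn φ (Icc t₀ t₁) := by
    apply ((ContinuousLinearMap.apply ℝ ℝ d).continuous.comp_continuousOn ?_).congr
    · intro t _; rfl
    exact (contOnG' hU hG).comp (Continuous.continuousOn (continuous_const.add (continuous_id.smul continuous_const))) hmemU
  have hφmono : MonotoneOn φ (Icc t₀ t₁) := by
    apply monotoneOn_of_deriv_nonneg (convex_Icc t₀ t₁) hφc
    · rw [interior_Icc]
      exact fun t htm => ((hφd t htm).differentiableAt).differentiableWithinAt
    · rw [interior_Icc]
      intro t htm
      rw [(hφd t htm).deriv]
      exact hess_nonneg_S hU hUc hG hs21 hτ (hint t htm) d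
  constructor
  · exact hφmono ⟨le_refl t₀, ht.le⟩ ⟨ht.le, le_refl t₁⟩ ht.le
  · set g : ℝ → ℝ := fun t => G (z₀ + t • d) - (t - t₀) * φ t₀ with hg
    have hgc : ContinuousOn g (Icc t₀ t₁) := by
      apply ContinuousOn.sub
      · exact (hG.continuousOn).comp (Continuous.continuousOn (continuous_const.add (continuous_id.smul continuous_const))) hmemU
      · exact (continuous_id.sub continuous_const).continuousOn.mul continuousOn_const
    have hgmono : MonotoneOn g (Icc t₀ t₁) := by
      apply monotoneOn_of_deriv_nonneg (convex_Icc t₀ t₁) hgc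
      · rw [interior_Icc]
        intro t htm
        have h1 : HasDerivAt g (φ t - φ t₀) t := by
          apply HasDerivAt.sub
          · exact (diffAtG hU hG (hUc (Scone_subset_cone (hint t htm)))).hasFDerivAt.comp_hasDerivAt t (hz t)
          · simpa using ((hasDerivAt_id t).sub_const t₀).mul_const (φ t₀)
        exact h1.differentiableAt.differentiableWithinAt
      · rw [interior_Icc]
        intro t htm
        have h1 : HasDerivAt g (φ t - φ t₀) t := by
          apply HasDerivAt.sub
          · exact (diffAtG hU hG (hUc (Scone_subset_cone (hint t htm)))).hasFDerivAt.comp_hasDerivAt t (hz t)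
          · simpa using ((hasDerivAt_id t).sub_const t₀).mul_const (φ t₀)
        rw [h1.deriv, sub_nonneg]
        exact hφmono ⟨le_refl t₀, ht.le⟩ ⟨htm.1.le, htm.2.le⟩ htm.1.le
    have := hgmono ⟨le_refl t₀, ht.le⟩ ⟨ht.le, le_refl t₁⟩ ht.le
    simp only [hg, sub_self, zero_mul, sub_zero] at this
    linarith [this]

include hU hUc hG in
lemma stepA (hθ : θ ∈ Ioo 0 π)
    (hs21 : ∀ l : ℝ, 0 < l → ∀ u ∈ sphCap n θ, G (l • u) = l * G u)
    (hτ : ∀ u ∈ sphCap n θ, ∀ v : V n, 0 ≤ fderiv ℝ (fderiv ℝ G) u v v)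
    (hcap : ∀ u ∈ sphCapBdry n θ, fderiv ℝ G u (Etop n) = 0)
    (hGpos : ∀ u ∈ sphCap n θ, 0 < G u)
    {u : V n} (hu : u ∈ sphCap n θ) (hust : Real.cos θ < u (Fin.last n)) :
    0 ≤ fderiv ℝ G u (Etop n) := by
  set c : ℝ := Real.cos θ with hc
  set sθ : ℝ := Real.sin θ with hsθ
  have hs_pos : 0 < sθ := Real.sin_pos_of_pos_of_lt_pi hθ.1 hθ.2
  have hcs : sθ ^ 2 + c ^ 2 = 1 := by rw [hsθ, hc]; rw [Real.sin_sq_add_cos_sq]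
  have hetopcap : Etop n ∈ sphCap n θ := by
    refine ⟨norm_etop, ?_⟩
    rw [etop_last]; exact Real.cos_le_one θ
  by_cases hue : u = Etop n
  · rw [hue, eulerG hU hUc hG hs21 (sphCap_subset_cone hetopcap)]
    exact (hGpos _ hetopcap).le
  -- main case
  set b : ℝ := u (Fin.last n) with hb
  have hb1 : b ≤ 1 := by
    have := abs_real_inner_le_norm u (Etop n)
    rw [inner_etop, hu.1, norm_etop, mul_one] at this
    exact le_trans (le_abs_self _) this
  have hbm1 : -(1:ℝ) ≤ b := by
    have := abs_real_inner_le_norm u (Etop n)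
    rw [inner_etop, hu.1, norm_etop, mul_one] at this
    exact neg_le_of_abs_le this
  set u' : V n := u - b • Etop n with hu'
  have hu'last : u' (Fin.last n) = 0 := by
    rw [hu', apply_last_sub, apply_last_smul, etop_last]; ring
  set r : ℝ := ‖u'‖ with hr
  have hinner_ue : ⟪u, Etop n⟫ = b := inner_etop u
  have hr2 : r ^ 2 = 1 - b ^ 2 := by
    rw [hr, hu', norm_sub_sq_real, real_inner_smul_right, hinner_ue, norm_smul, hu.1]
    rw [Real.norm_eq_abs, norm_etop]
    rw [mul_pow, sq_abs]
    ring
  have hrpos : 0 < r := by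
    rcases lt_or_eq_of_le (norm_nonneg u') with h | h
    · exact h
    exfalso
    have hu0 : u' = 0 := by rw [← norm_eq_zero, ← h]
    have hub : u = b • Etop n := by rwa [hu', sub_eq_zero] at hu0
    have : b ^ 2 = 1 := by
      have := hr2
      rw [hr, hu0] at this
      simp at this
      linarith [this]
    have hb2 : b = 1 ∨ b = -1 := sq_eq_one_iff_of_ne_neg_one_aux this
    rcases hb2 with h1 | h1
    · apply hue
      rw [hub, h1, one_smul]
    · have : c < -1 := by rw [← h1]; exact hust
      linarith [Real.neg_one_le_cos θ]
  set m : V n := r⁻¹ • u' with hm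
  have hm1 : ‖m‖ = 1 := by
    rw [hm, norm_smul, norm_inv, norm_norm, ← hr]; field_simp
  have hmlast : m (Fin.last n) = 0 := by
    rw [hm, apply_last_smul, hu'last]; ring
  have hinner_me : ⟪m, Etop n⟫ = 0 := by rw [inner_etop, hmlast]
  set z₀ : V n := sθ • m with hz₀
  -- the general point on the vertical segment
  have hzlast : ∀ t : ℝ, (z₀ + t • Etop n) (Fin.last n) = t := by
    intro t
    have hz0l : z₀ (Fin.last n) = 0 := by rw [hz₀, apply_last_smul, hmlast]; ring
    simp only [apply_last_add, apply_last_smul, etop_last, hmlast, hz0l]; ring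
  have hznorm : ∀ t : ℝ, ‖z₀ + t • Etop n‖ ^ 2 = sθ ^ 2 + t ^ 2 := by
    intro t
    have h1 : ⟪z₀, t • Etop n⟫ = 0 := by
      rw [hz₀, real_inner_smul_left, real_inner_smul_right, hinner_me]; ring
    have h2 : ‖z₀‖ = sθ := by
      rw [hz₀, norm_smul, hm1, mul_one, Real.norm_eq_abs, abs_of_pos hs_pos]
    have h3 : ‖t • Etop n‖ ^ 2 = t ^ 2 := by
      rw [norm_smul, norm_etop, mul_one, Real.norm_eq_abs, sq_abs]
    rw [norm_add_sq_real, h1, h2, h3]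
    ring
  -- q is the boundary point
  have hqbdry : z₀ + c • Etop n ∈ sphCapBdry n θ := by
    constructor
    · have h2 := hznorm c
      rw [hcs] at h2
      nlinarith [norm_nonneg (z₀ + c • Etop n)]
    · rw [hzlast]
  have hqcap : z₀ + c • Etop n ∈ sphCap n θ := ⟨hqbdry.1, le_of_eq hqbdry.2.symm⟩
  -- the top endpoint
  have huS : u ∈ Scone n θ := by
    refine ⟨by rw [hu.1]; norm_num, ?_⟩
    rw [hu.1, mul_one]; exact hust
  set t₁ : ℝ := sθ * b / r with ht₁
  have htop : z₀ + t₁ • Etop n = (sθ / r) • u := by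
    have husplit : u = u' + b • Etop n := by rw [hu']; abel
    rw [husplit, smul_add]
    have e1 : z₀ = (sθ / r) • u' := by
      rw [hz₀, hm, smul_smul]
      congr 1
      try field_simp
    have e2 : t₁ • Etop n = (sθ / r) • (b • Etop n) := by
      rw [smul_smul, ht₁]
      congr 1
      try field_simp
      try ring
    rw [e1, e2]
  have ht01 : c < t₁ := by
    set α : ℝ := Real.arccos b with hα
    have hcosα : Real.cos α = b := Real.cos_arccos hbm1 hb1
    have hsinα : Real.sin α = r := by
      rw [hα, Real.sin_arccos]
      rw [show (1:ℝ) - b ^ 2 = r ^ 2 by linarith [hr2]]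
      exact Real.sqrt_sq (norm_nonneg u')
    have hαθ : α < θ := by
      by_contra hcon
      push_neg at hcon
      have h1 : Real.cos α ≤ Real.cos θ := by
        rcases eq_or_lt_of_le hcon with h | h
        · rw [h]
        · exact (Real.cos_lt_cos_of_nonneg_of_le_pi hθ.1.le (Real.arccos_le_pi b) h).le
      rw [hcosα] at h1
      exact absurd hust (not_lt.2 h1)
    have hsin_pos : 0 < Real.sin (θ - α) := by
      apply Real.sin_pos_of_pos_of_lt_pi
      · linarith
      · have : 0 ≤ α := Real.arccos_nonneg b
        linarith [hθ.2]
    rw [Real.sin_sub, hcosα, hsinα] at hsin_pos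
    rw [ht₁, lt_div_iff₀ hrpos]
    rw [hc, hsθ]
    linarith [hsin_pos]
  -- interior membership
  have hint : ∀ t ∈ Ioo c t₁, z₀ + t • Etop n ∈ Scone n θ := by
    intro t htm
    have hN2 := hznorm t
    set N : ℝ := ‖z₀ + t • Etop n‖ with hN
    have hN0 : 0 ≤ N := norm_nonneg _
    have hNpos : 0 < N := by nlinarith [hN2]
    refine ⟨hNpos, ?_⟩
    rw [hzlast]
    show c * N < t
    rcases le_or_gt c 0 with hcase | hcase
    · rcases lt_or_ge 0 t with hcase2 | hcase2
      · calc c * N ≤ 0 := mul_nonpos_of_nonpos_of_nonneg hcase hN0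
        _ < t := hcase2
      · -- c < t ≤ 0, so c < 0, t² < c²
        have hclt : c < t := htm.1
        have hc0 : c < 0 := lt_of_lt_of_le hclt hcase2
        have ht2 : t ^ 2 < c ^ 2 := by
          nlinarith [mul_pos (show (0:ℝ) < -(c+t) by linarith) (show (0:ℝ) < t - c by linarith)]
        have hc2 : c ^ 2 = 1 - sθ ^ 2 := by linarith
        have hkey : (c * N) ^ 2 - t ^ 2 = sθ ^ 2 * (c ^ 2 - t ^ 2) := by
          rw [mul_pow, hN2, hc2]; ring
        have h1 : (-t) ^ 2 < (-(c * N)) ^ 2 := by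
          have : 0 < sθ ^ 2 * (c ^ 2 - t ^ 2) :=
            mul_pos (pow_pos hs_pos 2) (by linarith)
          rw [neg_pow, neg_pow]
          nlinarith
        have h2 : -t < -(c * N) :=
          lt_of_pow_lt_pow_left₀ 2 (by nlinarith [mul_nonpos_of_nonpos_of_nonneg hc0.le hN0]) h1
        linarith
    · -- 0 < c < t
      have hclt : c < t := htm.1
      have ht0 : 0 < t := lt_trans hcase hclt
      have ht2 : c ^ 2 < t ^ 2 := by nlinarith
      have hc2 : c ^ 2 = 1 - sθ ^ 2 := by linarith
      have hkey : t ^ 2 - (c * N) ^ 2 = sθ ^ 2 * (t ^ 2 - c ^ 2) := by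
        rw [mul_pow, hN2, hc2]; ring
      have h1 : (c * N) ^ 2 < t ^ 2 := by
        have : 0 < sθ ^ 2 * (t ^ 2 - c ^ 2) := mul_pos (pow_pos hs_pos 2) (by linarith)
        linarith
      exact lt_of_pow_lt_pow_left₀ 2 ht0.le h1
  -- apply segment lemma
  have hseg := seg_lemma hU hUc hG hs21 hτ z₀ (Etop n) ht01 hint
    (hUc (sphCap_subset_cone hqcap))
    (by rw [htop]; exact hUc (Scone_subset_cone (smul_mem_Scone huS (by positivity))))
  have h0 : fderiv ℝ G (z₀ + c • Etop n) (Etop n) = 0 := hcap _ hqbdry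
  have hfd : fderiv ℝ G (z₀ + t₁ • Etop n) (Etop n) = fderiv ℝ G u (Etop n) := by
    rw [htop, fderiv_smul_eq hU hUc hG hs21 huS (by positivity)]
  rw [h0, hfd] at hseg
  exact hseg.1
include hU hUc hG in
lemma main_interior {C : ℝ} (hθ : θ ∈ Ioo 0 π) (hC : 0 < C)
    (hs21 : ∀ l : ℝ, 0 < l → ∀ u ∈ sphCap n θ, G (l • u) = l * G u)
    (hτ : ∀ u ∈ sphCap n θ, ∀ v : V n, 0 ≤ fderiv ℝ (fderiv ℝ G) u v v)
    (hcap : ∀ u ∈ sphCapBdry n θ, fderiv ℝ G u (Etop n) = 0)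
    (hGbd : ∀ u ∈ sphCap n θ, 0 < G u ∧ G u ≤ C)
    {u : V n} (hu : u ∈ sphCap n θ) (hust : Real.cos θ < u (Fin.last n)) :
    ‖gradient G u - G u • u‖ ≤ C / Real.sin θ := by
  set c : ℝ := Real.cos θ with hc
  set sθ : ℝ := Real.sin θ with hsθ
  have hs_pos : 0 < sθ := Real.sin_pos_of_pos_of_lt_pi hθ.1 hθ.2
  have hGpos : ∀ y ∈ sphCap n θ, 0 < G y := fun y hy => (hGbd y hy).1
  have huU : u ∈ U := hUc (sphCap_subset_cone hu)
  have huS : u ∈ Scone n θ := ⟨by rw [hu.1]; norm_num, by rw [hu.1, mul_one]; exact hust⟩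
  have hgrad : ∀ y : V n, ⟪gradient G u, y⟫ = fderiv ℝ G u y := fun y => by
    rw [gradient, InnerProductSpace.toDual_symm_apply]
  have hEuler : fderiv ℝ G u u = G u := eulerG hU hUc hG hs21 (sphCap_subset_cone hu)
  set T : V n := gradient G u - G u • u with hT
  by_cases hT0 : T = 0
  · rw [hT0, norm_zero]
    positivity
  have hTn : 0 < ‖T‖ := norm_pos_iff.2 hT0
  set w : V n := ‖T‖⁻¹ • T with hwdef
  have hw : ‖w‖ = 1 := norm_smul_inv_norm hT0
  have hTu : ⟪T, u⟫ = 0 := by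
    rw [hT, inner_sub_left, real_inner_smul_left, hgrad u, hEuler,
      real_inner_self_eq_norm_sq, hu.1]
    ring
  have hfw : fderiv ℝ G u w = ‖T‖ := by
    rw [← hgrad w]
    have hgT : gradient G u = T + G u • u := by rw [hT]; abel
    rw [hgT, inner_add_left, hwdef, real_inner_smul_right, real_inner_smul_right,
      real_inner_self_eq_norm_sq, real_inner_smul_left]
    rw [show ⟪u, T⟫ = 0 from by rw [real_inner_comm]; exact hTu]
    field_simp
    ring
  obtain ⟨lam, mu, hlam, hmu, hvnorm, hvlast⟩ := construct_v hθ hw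
  set v : V n := lam • w + mu • Etop n with hvdef
  have hvcap : v ∈ sphCap n θ := ⟨hvnorm, le_trans (le_abs_self c) hvlast⟩
  have hlampos : 0 < lam := lt_of_lt_of_le hs_pos hlam
  -- the segment from u to v stays in the strict cone
  set b : ℝ := u (Fin.last n) with hbdef
  have hiuv : |⟪u, v⟫| ≤ 1 := by
    have h := abs_real_inner_le_norm u v
    rwa [hu.1, hvnorm, mul_one] at h
  have hneg1 : -1 < ⟪u, v⟫ := by
    rcases eq_or_lt_of_le (neg_le_of_abs_le hiuv) with h | h
    · exfalso
      have hveq : v = -u := by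
        have h0 : ‖u + v‖ ^ 2 = 0 := by
          rw [norm_add_sq_real, hu.1, hvnorm, ← h]; norm_num
        have huv0 : u + v = 0 := by
          rw [← norm_eq_zero]
          nlinarith [norm_nonneg (u + v)]
        linear_combination (norm := module) huv0
      have hvl : v (Fin.last n) = -b := by
        rw [hveq]; show -(u (Fin.last n)) = -b; rw [hbdef]
      rw [hvl] at hvlast
      linarith [neg_le_abs c, hvlast, hust]
    · exact h
  have hint : ∀ t ∈ Ioo (0:ℝ) 1, u + t • (v - u) ∈ Scone n θ := by
    intro t htm
    obtain ⟨ht0, ht1⟩ := htm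
    have hzeq : u + t • (v - u) = (1 - t) • u + t • v := by module
    rw [hzeq]
    set z : V n := (1 - t) • u + t • v with hzdef
    have hzlast : z (Fin.last n) = (1 - t) * b + t * (v (Fin.last n)) := by
      rw [hzdef, apply_last_add, apply_last_smul, apply_last_smul, ← hbdef]
    have hznorm2 : ‖z‖ ^ 2 = (1 - t) ^ 2 + t ^ 2 + 2 * t * (1 - t) * ⟪u, v⟫ := by
      rw [hzdef, norm_add_sq_real, real_inner_smul_left, real_inner_smul_right,
        norm_smul, norm_smul, hu.1, hvnorm, Real.norm_eq_abs, Real.norm_eq_abs,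
        abs_of_pos (by linarith : (0:ℝ) < 1 - t), abs_of_pos ht0]
      ring
    have hznorm_le : ‖z‖ ≤ 1 := by
      rw [hzdef]
      calc ‖(1 - t) • u + t • v‖ ≤ ‖(1 - t) • u‖ + ‖t • v‖ := norm_add_le _ _
      _ = (1 - t) + t := by
          rw [norm_smul, norm_smul, hu.1, hvnorm, Real.norm_eq_abs, Real.norm_eq_abs,
            abs_of_pos (by linarith : (0:ℝ) < 1 - t), abs_of_pos ht0]
          ring
      _ = 1 := by ring
    rcases le_or_gt 0 c with hcpos | hcneg
    · -- c ≥ 0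
      have h1 : c < z (Fin.last n) := by
        rw [hzlast]
        have hv1 : c ≤ v (Fin.last n) := le_trans (le_abs_self c) hvlast
        nlinarith [hust, hv1]
      have hz0 : 0 < ‖z‖ := by
        rw [norm_pos_iff]
        intro hzz
        rw [hzz] at h1
        have hz00 : (0 : V n) (Fin.last n) = 0 := rfl
        rw [hz00] at h1
        linarith
      refine ⟨hz0, ?_⟩
      calc c * ‖z‖ ≤ c * 1 := by
            apply mul_le_mul_of_nonneg_left hznorm_le hcpos
      _ = c := mul_one c
      _ < z (Fin.last n) := h1
    · -- c < 0
      have hkey : ‖z‖ ^ 2 - (1 - 2*t) ^ 2 = 2 * t * (1 - t) * (1 + ⟪u, v⟫) := by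
        rw [hznorm2]; ring
      have hpos : 0 < 2 * t * (1 - t) * (1 + ⟪u, v⟫) := by
        apply mul_pos
        · nlinarith
        · linarith [hneg1]
      have habs : |1 - 2*t| < ‖z‖ := by
        apply lt_of_pow_lt_pow_left₀ 2 (norm_nonneg z)
        rw [sq_abs]
        linarith
      have hz0 : 0 < ‖z‖ := lt_of_le_of_lt (abs_nonneg _) habs
      refine ⟨hz0, ?_⟩
      have h2 : c * ‖z‖ < c * |1 - 2*t| := by
        exact mul_lt_mul_of_neg_left habs hcneg
      have h3 : c * |1 - 2*t| ≤ c * (1 - 2*t) := by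
        apply mul_le_mul_of_nonpos_left (le_abs_self _) hcneg.le
      have h4 : c * (1 - 2*t) ≤ z (Fin.last n) := by
        rw [hzlast]
        have hv1 : -c ≤ v (Fin.last n) := le_trans (neg_le_abs c) hvlast
        nlinarith [hust, hv1]
      linarith
  have hz0' : u + (0:ℝ) • (v - u) = u := by module
  have hz1' : u + (1:ℝ) • (v - u) = v := by module
  have hseg := seg_lemma hU hUc hG hs21 hτ u (v - u) (by norm_num : (0:ℝ) < 1) hint
    (by rw [hz0']; exact huU)
    (by rw [hz1']; exact hUc (sphCap_subset_cone hvcap))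
  have hseg2 := hseg.2
  rw [hz0', hz1'] at hseg2
  norm_num at hseg2
  -- so G u + fderiv G u (v - u) ≤ G v
  have hfv : fderiv ℝ G u v ≤ C := by
    rw [hEuler] at hseg2
    have := (hGbd v hvcap).2
    linarith [hseg2]
  have hstep : 0 ≤ fderiv ℝ G u (Etop n) :=
    stepA hU hUc hG hθ hs21 hτ hcap hGpos hu hust
  have hexp : fderiv ℝ G u v = lam * fderiv ℝ G u w + mu * fderiv ℝ G u (Etop n) := by
    conv_lhs => rw [hvdef]
    rw [map_add, map_smul (fderiv ℝ G u) lam w, map_smul (fderiv ℝ G u) mu (Etop n)]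
    rfl
  rw [hfw] at hexp
  have hlamT : lam * ‖T‖ ≤ C := by
    rw [hexp] at hfv
    nlinarith [mul_nonneg hmu hstep]
  calc ‖T‖ ≤ C / lam := by
        rw [le_div_iff₀ hlampos]
        linarith [hlamT]
  _ ≤ C / sθ := by gcongr

end calc1

/-- gradient estimate for capillary support functions. -/
theorem capillary_gradient_estimate (n : ℕ) (hn : 1 ≤ n) (θ : ℝ) (hθ : θ ∈ Ioo 0 π)
    (C : ℝ) (hC : 0 < C)
    (s G : V n → ℝ) (hs : IsHomExt n θ 2 s G) (hcap : IsCapillaryF n θ G)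
    (hτ : TauPos n θ G)
    (hbd : ∀ ζ ∈ capCap n θ, 0 < s ζ ∧ s ζ ≤ C) :
    ∀ u ∈ sphCap n θ, ‖gradient G u - G u • u‖ ≤ C / Real.sin θ := by
  obtain ⟨⟨U, hU, hUc, hG⟩, hs21, hs22⟩ := hs
  have hτ1 : ∀ u ∈ sphCap n θ, ∀ v : V n, 0 ≤ fderiv ℝ (fderiv ℝ G) u v v := hτ.1
  have hcap' : ∀ u ∈ sphCapBdry n θ, fderiv ℝ G u (Etop n) = 0 := hcap
  set c : ℝ := Real.cos θ with hcdef
  set sθ : ℝ := Real.sin θ with hsθdef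
  have hs_pos : 0 < sθ := Real.sin_pos_of_pos_of_lt_pi hθ.1 hθ.2
  have hcs : sθ ^ 2 + c ^ 2 = 1 := by rw [hsθdef, hcdef]; rw [Real.sin_sq_add_cos_sq]
  have hGbd : ∀ u ∈ sphCap n θ, 0 < G u ∧ G u ≤ C := by
    intro u hu
    have hζ : u - c • Etop n ∈ capCap n θ := by
      constructor
      · show 0 ≤ (u - c • Etop n) (Fin.last n)
        rw [apply_last_sub, apply_last_smul, etop_last]
        have := hu.2
        rw [← hcdef] at this
        linarith
      · rw [sub_add_cancel]
        exact hu.1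
    have h2 := hs22 _ hζ
    rw [sub_add_cancel] at h2
    have h3 := hbd _ hζ
    rw [← h2] at h3
    exact h3
  intro u hu
  have huc2 : c ≤ u (Fin.last n) := hu.2
  rcases lt_or_eq_of_le huc2 with hust | hust
  · exact main_interior hU hUc hG hθ hC hs21 hτ1 hcap' hGbd hu hust
  · -- boundary case: u (last) = c ; approximate from the interior
    have huU : u ∈ U := hUc (sphCap_subset_cone hu)
    set F : V n → ℝ := fun y => ‖gradient G y - G y • y‖ with hF
    have hFcont : ContinuousOn F U := by
      have h1 : ContinuousOn (fun y : V n => gradient G y) U := by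
        have heq : (fun y : V n => gradient G y)
            = fun y => (InnerProductSpace.toDual ℝ (V n)).symm (fderiv ℝ G y) := rfl
        rw [heq]
        exact (InnerProductSpace.toDual ℝ (V n)).symm.continuous.comp_continuousOn
          (contOnG' hU hG)
      exact ((h1.sub ((hG.continuousOn).smul continuousOn_id)).norm : _)
    set g : ℝ → V n := fun ε => ‖u + ε • Etop n‖⁻¹ • (u + ε • Etop n) with hg
    have hylast : ∀ ε : ℝ, (u + ε • Etop n) (Fin.last n) = c + ε := by
      intro ε
      rw [apply_last_add, apply_last_smul, etop_last, ← hust]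
      ring
    have hynorm : ∀ ε : ℝ, ‖u + ε • Etop n‖ ^ 2 = sθ ^ 2 + (c + ε) ^ 2 := by
      intro ε
      have hiue : ⟪u, Etop n⟫ = c := by rw [inner_etop, ← hust]
      rw [norm_add_sq_real, real_inner_smul_right, hiue, norm_smul, hu.1, norm_etop,
        Real.norm_eq_abs, mul_one, sq_abs]
      nlinarith [hcs]
    have hbound : ∀ ε : ℝ, 0 < ε → F (g ε) ≤ C / sθ := by
      intro ε hε
      have hN2 := hynorm ε
      have hNpos : 0 < ‖u + ε • Etop n‖ := by
        have := norm_nonneg (u + ε • Etop n)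
        nlinarith
      have hkey : c * ‖u + ε • Etop n‖ < c + ε :=
        cone_strict_aux hs_pos hcs hN2 (norm_nonneg _) (by linarith)
      have hy0 : u + ε • Etop n ≠ 0 := by
        intro h0
        rw [h0, norm_zero] at hNpos
        exact lt_irrefl 0 hNpos
      have hglast : (g ε) (Fin.last n) = ‖u + ε • Etop n‖⁻¹ * (c + ε) := by
        rw [hg]
        show ‖u + ε • Etop n‖⁻¹ * ((u + ε • Etop n) (Fin.last n)) = _
        rw [hylast]
      have hgcap : g ε ∈ sphCap n θ := by
        constructor
        · exact norm_smul_inv_norm hy0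
        · rw [hglast, ← hcdef]
          rw [← div_eq_inv_mul, le_div_iff₀ hNpos]
          linarith [hkey]
      have hgst : c < (g ε) (Fin.last n) := by
        rw [hglast, ← div_eq_inv_mul, lt_div_iff₀ hNpos]
        linarith [hkey]
      exact main_interior hU hUc hG hθ hC hs21 hτ1 hcap' hGbd hgcap hgst
    have hg0 : g 0 = u := by
      have h30 : u + (0:ℝ) • Etop n = u := by rw [zero_smul, add_zero]
      rw [hg]
      show ‖u + (0:ℝ) • Etop n‖⁻¹ • (u + (0:ℝ) • Etop n) = u
      rw [h30, hu.1, inv_one, one_smul]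
    have hgtend : Filter.Tendsto g (nhdsWithin 0 (Ioi (0:ℝ))) (nhds u) := by
      have h1 : Continuous (fun ε : ℝ => u + ε • Etop n) :=
        continuous_const.add (continuous_id.smul continuous_const)
      have h2 : ContinuousAt (fun ε : ℝ => ‖u + ε • Etop n‖) 0 := h1.norm.continuousAt
      have h3 : ContinuousAt g 0 := by
        apply ContinuousAt.fun_smul
        · apply h2.inv₀
          show ‖u + (0:ℝ) • Etop n‖ ≠ 0
          rw [zero_smul, add_zero, hu.1]
          norm_num
        · exact h1.continuousAt
      have := h3.tendsto
      rw [hg0] at this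
      exact this.mono_left nhdsWithin_le_nhds
    have hFtend : Filter.Tendsto (F ∘ g) (nhdsWithin 0 (Ioi (0:ℝ))) (nhds (F u)) :=
      (hFcont.continuousAt (hU.mem_nhds huU)).tendsto.comp hgtend
    have hev : ∀ᶠ ε in nhdsWithin 0 (Ioi (0:ℝ)), (F ∘ g) ε ≤ C / sθ := by
      filter_upwards [self_mem_nhdsWithin] with ε hε
      exact hbound ε hε
    exact le_of_tendsto hFtend hev
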